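/- (Proposition 3.) Suppose r ≠ 0 and the payoffs A₁, A₀, B₁, B₀ are not all equal. Then every maximizer δ* = (δ₁*, δ₀*) of EU_D(· | r) over [0,1]² satisfies δ₁* ∈ {0, 1} or δ₀* ∈ {0, 1} (or both); that is, the optimal classifier is never interior in both coordinates. -/

import Mathlib

open MeasureTheory

/-- A cost distribution: a CDF `F` with continuously differentiable structure
given by a strictly positive, differentiable, log-concave density `f` with full
support on `ℝ`. -/
structure CostDist where
  F : ℝ → ℝ
  f : ℝ → ℝ
  deriv_eq : ∀ x : ℝ, HasDerivAt F (f x) x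
  f_pos : ∀ x : ℝ, 0 < f x
  f_diff : Differentiable ℝ f
  f_logConcave : ConcaveOn ℝ Set.univ fun x => Real.log (f x)
  tendsto_bot : Filter.Tendsto F Filter.atBot (nhds 0)
  tendsto_top : Filter.Tendsto F Filter.atTop (nhds 1)

/-- Expected responsiveness of the classifier `δ = (δ₁, δ₀)` at precision `φ`. -/
noncomputable def rho (d1 d0 phi : ℝ) : ℝ := (d1 + d0 - 1) * (2 * phi - 1)

/-- The designer's expected payoff `EU_D(δ | r)`. -/
noncomputable def EUD (D : CostDist) (phi A1 A0 B1 B0 r d1 d0 : ℝ) : ℝ :=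
  D.F (r * rho d1 d0 phi) *
      (phi * (A1 * d1 + A0 * (1 - d1)) + (1 - phi) * (A0 * d0 + A1 * (1 - d0))) +
    (1 - D.F (r * rho d1 d0 phi)) *
      (phi * (B1 * d0 + B0 * (1 - d0)) + (1 - phi) * (B0 * d1 + B1 * (1 - d1)))

/-- A voter's expected payoff conditional on complying, `EU₁(r | γ)`. -/
noncomputable def EU1 (D : CostDist) (phi t gamma d1 d0 r : ℝ) : ℝ :=
  -gamma + r * rho d1 d0 phi * (1 - D.F (r * rho d1 d0 phi)) + t * D.F (r * rho d1 d0 phi)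

/-- A voter's expected payoff conditional on not complying, `EU₀(r)`. -/
noncomputable def EU0 (D : CostDist) (phi t d1 d0 r : ℝ) : ℝ :=
  -(r * rho d1 d0 phi) * D.F (r * rho d1 d0 phi) + t * D.F (r * rho d1 d0 phi)

/-- A voter's overall payoff `V(r | γ) = max(EU₁(r | γ), EU₀(r))`. -/
noncomputable def V (D : CostDist) (phi t gamma d1 d0 r : ℝ) : ℝ :=
  max (EU1 D phi t gamma d1 d0 r) (EU0 D phi t d1 d0 r)

/-- Strict quasiconcavity of a real function on a set. -/
def StrictQuasiconcaveOn (s : Set ℝ) (g : ℝ → ℝ) : Prop :=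
  ∀ ⦃x⦄, x ∈ s → ∀ ⦃y⦄, y ∈ s → x ≠ y → ∀ ⦃a b : ℝ⦄, 0 < a → 0 < b → a + b = 1 →
    min (g x) (g y) < g (a * x + b * y)

/-- Strict quasiconvexity of a real function on a set. -/
def StrictQuasiconvexOn (s : Set ℝ) (g : ℝ → ℝ) : Prop :=
  ∀ ⦃x⦄, x ∈ s → ∀ ⦃y⦄, y ∈ s → x ≠ y → ∀ ⦃a b : ℝ⦄, 0 < a → 0 < b → a + b = 1 →
    g (a * x + b * y) < max (g x) (g y)

/-- `(r, δ)` is an equilibrium: `r` maximizes the median voter's payoff given `δ`,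
and `δ ∈ [0,1]²` maximizes the designer's payoff given `r`. -/
def IsEquilibrium (D : CostDist) (phi t A1 A0 B1 B0 gammaMu r d1 d0 : ℝ) : Prop :=
  d1 ∈ Set.Icc (0 : ℝ) 1 ∧ d0 ∈ Set.Icc (0 : ℝ) 1 ∧
  (∀ r' : ℝ, V D phi t gammaMu d1 d0 r' ≤ V D phi t gammaMu d1 d0 r) ∧
  (∀ e1 ∈ Set.Icc (0 : ℝ) 1, ∀ e0 ∈ Set.Icc (0 : ℝ) 1,
    EUD D phi A1 A0 B1 B0 r e1 e0 ≤ EUD D phi A1 A0 B1 B0 r d1 d0)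

lemma hasDerivAt_affine (a b u : ℝ) : HasDerivAt (fun x : ℝ => a * x + b) a u := by
  simpa using ((hasDerivAt_id u).const_mul a).add_const b

lemma EUD_hasDerivAt_fst (D : CostDist) (phi A1 A0 B1 B0 r v u : ℝ) :
    HasDerivAt (fun u => EUD D phi A1 A0 B1 B0 r u v)
      (r * (2 * phi - 1) * D.f (r * rho u v phi) *
        ((phi * (A1 * u + A0 * (1 - u)) + (1 - phi) * (A0 * v + A1 * (1 - v)))
          - (phi * (B1 * v + B0 * (1 - v)) + (1 - phi) * (B0 * u + B1 * (1 - u))))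
        + D.F (r * rho u v phi) * (phi * (A1 - A0))
        + (1 - D.F (r * rho u v phi)) * ((1 - phi) * (B0 - B1))) u := by
  have hin : HasDerivAt (fun u : ℝ => r * rho u v phi) (r * (2 * phi - 1)) u := by
    have h := hasDerivAt_affine (r * (2 * phi - 1)) (r * (v - 1) * (2 * phi - 1)) u
    have he : (fun u : ℝ => r * rho u v phi)
        = fun u : ℝ => r * (2 * phi - 1) * u + r * (v - 1) * (2 * phi - 1) := by
      funext u; simp only [rho]; ring
    rw [he]; exact h
  have hF : HasDerivAt (fun u : ℝ => D.F (r * rho u v phi))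
      (D.f (r * rho u v phi) * (r * (2 * phi - 1))) u := by
    exact (D.deriv_eq (r * rho u v phi)).comp u hin
  have hPA : HasDerivAt
      (fun u : ℝ => phi * (A1 * u + A0 * (1 - u)) + (1 - phi) * (A0 * v + A1 * (1 - v)))
      (phi * (A1 - A0)) u := by
    have h := hasDerivAt_affine (phi * (A1 - A0))
      (phi * A0 + (1 - phi) * (A0 * v + A1 * (1 - v))) u
    have he : (fun u : ℝ => phi * (A1 * u + A0 * (1 - u)) + (1 - phi) * (A0 * v + A1 * (1 - v)))
        = fun u : ℝ => phi * (A1 - A0) * u + (phi * A0 + (1 - phi) * (A0 * v + A1 * (1 - v))) := by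
      funext u; ring
    rw [he]; exact h
  have hPB : HasDerivAt
      (fun u : ℝ => phi * (B1 * v + B0 * (1 - v)) + (1 - phi) * (B0 * u + B1 * (1 - u)))
      ((1 - phi) * (B0 - B1)) u := by
    have h := hasDerivAt_affine ((1 - phi) * (B0 - B1))
      (phi * (B1 * v + B0 * (1 - v)) + (1 - phi) * B1) u
    have he : (fun u : ℝ => phi * (B1 * v + B0 * (1 - v)) + (1 - phi) * (B0 * u + B1 * (1 - u)))
        = fun u : ℝ => (1 - phi) * (B0 - B1) * u + (phi * (B1 * v + B0 * (1 - v)) + (1 - phi) * B1) := by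
      funext u; ring
    rw [he]; exact h
  have h1mF : HasDerivAt (fun u : ℝ => 1 - D.F (r * rho u v phi))
      (-(D.f (r * rho u v phi) * (r * (2 * phi - 1)))) u := by
    have h := (hasDerivAt_const u (1:ℝ)).sub hF
    simp only [zero_sub] at h
    exact h
  have htot := (hF.mul hPA).add (h1mF.mul hPB)
  have hgoal : (fun u : ℝ => EUD D phi A1 A0 B1 B0 r u v)
      = fun u : ℝ => (fun u : ℝ => D.F (r * rho u v phi)) u *
          (fun u : ℝ => phi * (A1 * u + A0 * (1 - u)) + (1 - phi) * (A0 * v + A1 * (1 - v))) u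
        + (fun u : ℝ => 1 - D.F (r * rho u v phi)) u *
          (fun u : ℝ => phi * (B1 * v + B0 * (1 - v)) + (1 - phi) * (B0 * u + B1 * (1 - u))) u := by
    funext u; simp only [EUD]
  rw [hgoal]
  exact htot.congr_deriv (by ring)


set_option maxHeartbeats 1600000 in
/-- **Proposition 3.** If `r ≠ 0` and the payoffs are not all equal, then any maximizer
of `EU_D(· | r)` over `[0,1]²` has at least one coordinate at a corner. -/
theorem prop3 (D : CostDist) (phi : ℝ) (hphi : phi ∈ Set.Ioc (1 / 2 : ℝ) 1)
    (A1 A0 B1 B0 r : ℝ) (hA1 : 0 ≤ A1) (hA0 : 0 ≤ A0) (hB1 : 0 ≤ B1) (hB0 : 0 ≤ B0)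
    (hr : r ≠ 0) (hne : ¬(A1 = A0 ∧ A0 = B1 ∧ B1 = B0)) :
    ∀ d1 ∈ Set.Icc (0 : ℝ) 1, ∀ d0 ∈ Set.Icc (0 : ℝ) 1,
      (∀ e1 ∈ Set.Icc (0 : ℝ) 1, ∀ e0 ∈ Set.Icc (0 : ℝ) 1,
        EUD D phi A1 A0 B1 B0 r e1 e0 ≤ EUD D phi A1 A0 B1 B0 r d1 d0) →
      (d1 = 0 ∨ d1 = 1) ∨ (d0 = 0 ∨ d0 = 1) := by
  intro d1 hd1 d0 hd0 hmax
  by_contra hcon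
  push_neg at hcon
  obtain ⟨⟨h10, h11⟩, h00, h01⟩ := hcon
  have hd1o : 0 < d1 ∧ d1 < 1 := ⟨lt_of_le_of_ne hd1.1 (Ne.symm h10), lt_of_le_of_ne hd1.2 h11⟩
  have hd0o : 0 < d0 ∧ d0 < 1 := ⟨lt_of_le_of_ne hd0.1 (Ne.symm h00), lt_of_le_of_ne hd0.2 h01⟩
  have hphi1 : 1 / 2 < phi := hphi.1
  have hxne : r * (2 * phi - 1) ≠ 0 := by
    apply mul_ne_zero hr; intro h; linarith [h]
  -- a small ε
  obtain ⟨ε, hε, hε1, hε2, hε3, hε4⟩ :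
      ∃ ε : ℝ, 0 < ε ∧ ε < d1 ∧ ε < 1 - d1 ∧ ε < d0 ∧ ε < 1 - d0 := by
    have hpos : (0:ℝ) < min (min d1 (1 - d1)) (min d0 (1 - d0)) := by
      have h1 : (0:ℝ) < min d1 (1 - d1) := lt_min hd1o.1 (by linarith [hd1o.2])
      have h2 : (0:ℝ) < min d0 (1 - d0) := lt_min hd0o.1 (by linarith [hd0o.2])
      exact lt_min h1 h2
    refine ⟨min (min d1 (1 - d1)) (min d0 (1 - d0)) / 2, by linarith, ?_, ?_, ?_, ?_⟩
    · linarith [min_le_left d1 (1 - d1), min_le_left (min d1 (1 - d1)) (min d0 (1 - d0)), hd1o.1]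
    · linarith [min_le_right d1 (1 - d1), min_le_left (min d1 (1 - d1)) (min d0 (1 - d0)), hd1o.2]
    · linarith [min_le_left d0 (1 - d0), min_le_right (min d1 (1 - d1)) (min d0 (1 - d0)), hd0o.1]
    · linarith [min_le_right d0 (1 - d0), min_le_right (min d1 (1 - d1)) (min d0 (1 - d0)), hd0o.2]
  -- the shift identity along the antidiagonal
  have hshift : ∀ t : ℝ, EUD D phi A1 A0 B1 B0 r (d1 + t) (d0 - t)
      = EUD D phi A1 A0 B1 B0 r d1 d0
        + t * (D.F (r * rho d1 d0 phi) * (A1 - A0)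
          + (1 - D.F (r * rho d1 d0 phi)) * (B0 - B1)) := by
    intro t
    have harg : r * rho (d1 + t) (d0 - t) phi = r * rho d1 d0 phi := by
      simp only [rho]; ring
    simp only [EUD, harg]; ring
  -- Step 1 : c = 0
  have hc : D.F (r * rho d1 d0 phi) * (A1 - A0)
      + (1 - D.F (r * rho d1 d0 phi)) * (B0 - B1) = 0 := by
    set c := D.F (r * rho d1 d0 phi) * (A1 - A0)
      + (1 - D.F (r * rho d1 d0 phi)) * (B0 - B1) with hcdef
    rcases lt_trichotomy c 0 with h | h | h
    · have hm := hmax (d1 + (-ε)) ⟨by linarith, by linarith⟩ (d0 - (-ε)) ⟨by linarith, by linarith⟩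
      rw [hshift (-ε)] at hm
      nlinarith
    · exact h
    · have hm := hmax (d1 + ε) ⟨by linarith, by linarith⟩ (d0 - ε) ⟨by linarith, by linarith⟩
      rw [hshift ε] at hm
      nlinarith
  -- Step 2 : shifted interior points are local maxima, so the derivative vanishes
  have hloc : ∀ t : ℝ, 0 ≤ t → t ≤ ε →
      IsLocalMax (fun u => EUD D phi A1 A0 B1 B0 r u (d0 - t)) (d1 + t) := by
    intro t ht0 htε
    have hu0 : (0:ℝ) < d1 + t := by linarith
    have hu1 : d1 + t < 1 := by linarith
    filter_upwards [Ioo_mem_nhds hu0 hu1] with u hu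
    have h1 : EUD D phi A1 A0 B1 B0 r u (d0 - t) ≤ EUD D phi A1 A0 B1 B0 r d1 d0 :=
      hmax u ⟨hu.1.le, hu.2.le⟩ (d0 - t) ⟨by linarith, by linarith⟩
    have h2 := hshift t
    rw [hc, mul_zero, add_zero] at h2
    rw [h2]; exact h1
  have hder : ∀ t : ℝ, 0 ≤ t → t ≤ ε →
      r * (2 * phi - 1) * D.f (r * rho d1 d0 phi) *
        ((phi * (A1 * (d1 + t) + A0 * (1 - (d1 + t)))
            + (1 - phi) * (A0 * (d0 - t) + A1 * (1 - (d0 - t))))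
          - (phi * (B1 * (d0 - t) + B0 * (1 - (d0 - t)))
            + (1 - phi) * (B0 * (d1 + t) + B1 * (1 - (d1 + t)))))
        + D.F (r * rho d1 d0 phi) * (phi * (A1 - A0))
        + (1 - D.F (r * rho d1 d0 phi)) * ((1 - phi) * (B0 - B1)) = 0 := by
    intro t ht0 htε
    have harg : r * rho (d1 + t) (d0 - t) phi = r * rho d1 d0 phi := by
      simp only [rho]; ring
    have h := (hloc t ht0 htε).hasDerivAt_eq_zero
      (EUD_hasDerivAt_fst D phi A1 A0 B1 B0 r (d0 - t) (d1 + t))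
    rw [harg] at h
    exact h
  have hd0eq := hder 0 le_rfl hε.le
  have hdεeq := hder ε hε.le le_rfl
  have hsum : (A1 - A0) + (B1 - B0) = 0 := by
    have key : r * (2 * phi - 1) * D.f (r * rho d1 d0 phi)
        * (ε * ((A1 - A0) + (B1 - B0))) = 0 := by
      linear_combination hdεeq - hd0eq
    have hfne : D.f (r * rho d1 d0 phi) ≠ 0 := (D.f_pos _).ne'
    rcases mul_eq_zero.mp key with h | h
    · rcases mul_eq_zero.mp h with h' | h'
      · exact absurd h' hxne
      · exact absurd h' hfne
    · rcases mul_eq_zero.mp h with h' | h'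
      · exact absurd h' hε.ne'
      · exact h'
  -- Step 3 : A1 = A0 and B1 = B0
  have hA : A1 = A0 := by
    have : A1 - A0 = 0 := by linear_combination hc + (1 - D.F (r * rho d1 d0 phi)) * hsum
    linarith
  have hB : B1 = B0 := by linarith [hsum]
  have hAB : A1 ≠ B1 := by
    intro h; exact hne ⟨hA, by linarith, hB⟩
  -- F is strictly monotone
  have hFmono : StrictMono D.F := by
    apply strictMono_of_deriv_pos
    intro x
    rw [(D.deriv_eq x).deriv]
    exact D.f_pos x
  -- final contradiction
  have hmain : ∀ s : ℝ, -ε ≤ s → s ≤ ε →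
      (A1 - B1) * (D.F (r * rho d1 d0 phi + r * (2 * phi - 1) * s)
        - D.F (r * rho d1 d0 phi)) ≤ 0 := by
    intro s hs1 hs2
    have hm := hmax (d1 + s) ⟨by linarith, by linarith⟩ d0 hd0
    have harg : r * rho (d1 + s) d0 phi = r * rho d1 d0 phi + r * (2 * phi - 1) * s := by
      simp only [rho]; ring
    rw [show EUD D phi A1 A0 B1 B0 r (d1 + s) d0
        = B1 + (A1 - B1) * D.F (r * rho d1 d0 phi + r * (2 * phi - 1) * s) by
      rw [hA, hB]; simp only [EUD, harg]; ring] at hm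
    rw [show EUD D phi A1 A0 B1 B0 r d1 d0
        = B1 + (A1 - B1) * D.F (r * rho d1 d0 phi) by
      rw [hA, hB]; simp only [EUD]; ring] at hm
    linarith
  have hm1 := hmain ε (by linarith) le_rfl
  have hm2 := hmain (-ε) le_rfl (by linarith)
  clear hmax hshift hc hloc hder hd0eq hdεeq hsum hmain
  set a := r * rho d1 d0 phi with ha
  rcases lt_or_gt_of_ne hxne with hx | hx
  · -- x < 0 : a + x*ε < a < a + x*(-ε)
    have q1 : r * (2 * phi - 1) * ε < 0 := mul_neg_of_neg_of_pos hx hε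
    have q2 : 0 < r * (2 * phi - 1) * (-ε) := mul_pos_of_neg_of_neg hx (neg_lt_zero.mpr hε)
    have p1 : D.F (a + r * (2 * phi - 1) * ε) < D.F a := hFmono (by linarith)
    have p2 : D.F a < D.F (a + r * (2 * phi - 1) * (-ε)) := hFmono (by linarith)
    rcases lt_or_gt_of_ne hAB with h | h
    · nlinarith [hm1, p1]
    · nlinarith [hm2, p2]
  · have q1 : 0 < r * (2 * phi - 1) * ε := mul_pos hx hε
    have q2 : r * (2 * phi - 1) * (-ε) < 0 := mul_neg_of_pos_of_neg hx (neg_lt_zero.mpr hε)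
    have p1 : D.F a < D.F (a + r * (2 * phi - 1) * ε) := hFmono (by linarith)
    have p2 : D.F (a + r * (2 * phi - 1) * (-ε)) < D.F a := hFmono (by linarith)
    rcases lt_or_gt_of_ne hAB with h | h
    · nlinarith [hm2, p2]
    · nlinarith [hm1, p1]
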